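/- arXiv:2003.10871 — 2 statements merged into one kernel-verified Lean document; each statement's English description precedes it below -/
import Mathlib

section
/- Let M_α be the symmetric 2×2 matrix with entries [M_α]_{11} = 1 − 2αμ/N + α²ℓ₀²/N, [M_α]_{12} = [M_α]_{21} = ((α(ℓ+ℓ₀) + α²ℓ₀ℓ)/√N)·σ̄, [M_α]_{22} = (1 + 2αℓ + α²ℓ²)·σ̄², where 0 < μ ≤ ℓ ≤ ℓ₀, N ≥ 2, and 0 < σ̄ < 1. If 0 < α < σ̄/(3ℓ₀), then M_α is positive definite. -/
noncomputable def Malpha (μ ℓ ℓ₀ σ : ℝ) (N : ℕ) (α : ℝ) : Matrix (Fin 2) (Fin 2) ℝ :=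
  !![1 - 2 * α * μ / N + α ^ 2 * ℓ₀ ^ 2 / N,
      ((α * (ℓ + ℓ₀) + α ^ 2 * ℓ₀ * ℓ) / Real.sqrt N) * σ;
     ((α * (ℓ + ℓ₀) + α ^ 2 * ℓ₀ * ℓ) / Real.sqrt N) * σ,
      (1 + 2 * α * ℓ + α ^ 2 * ℓ ^ 2) * σ ^ 2]

lemma quad_form_pos (a b d x0 x1 : ℝ) (ha : 0 < a) (hdet : 0 < a * d - b ^ 2)
    (h : ¬(x0 = 0 ∧ x1 = 0)) : 0 < a * x0 ^ 2 + 2 * b * (x0 * x1) + d * x1 ^ 2 := by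
  by_cases h1 : x1 = 0
  · have h0 : x0 ≠ 0 := fun h0 => h ⟨h0, h1⟩
    have hx0 : 0 < x0 ^ 2 := (sq_nonneg _).lt_of_ne (Ne.symm (pow_ne_zero 2 h0))
    subst h1
    have := mul_pos ha hx0
    nlinarith
  · have hx1 : 0 < x1 ^ 2 := (sq_nonneg _).lt_of_ne (Ne.symm (pow_ne_zero 2 h1))
    nlinarith [sq_nonneg (a * x0 + b * x1), mul_pos hdet hx1]

set_option maxHeartbeats 1000000 in
theorem Malpha_posdef (μ ℓ ℓ₀ σ : ℝ) (N : ℕ) (α : ℝ)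
    (hμ : 0 < μ) (hμℓ : μ ≤ ℓ) (hℓℓ₀ : ℓ ≤ ℓ₀) (hN : 2 ≤ N)
    (hσ0 : 0 < σ) (hσ1 : σ < 1) (hα0 : 0 < α) (hα : α < σ / (3 * ℓ₀)) :
    (Malpha μ ℓ ℓ₀ σ N α).PosDef := by
  have hℓ0 : 0 < ℓ := lt_of_lt_of_le hμ hμℓ
  have hℓ₀0 : 0 < ℓ₀ := lt_of_lt_of_le hℓ0 hℓℓ₀
  have hn0 : (0:ℝ) < (N:ℝ) := by positivity
  have hn2 : (2:ℝ) ≤ (N:ℝ) := by exact_mod_cast hN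
  have hs : Real.sqrt N ^ 2 = (N:ℝ) := Real.sq_sqrt hn0.le
  have hs0 : 0 < Real.sqrt N := Real.sqrt_pos.mpr hn0
  have ht : α * ℓ₀ < σ / 3 := by
    have := (lt_div_iff₀ (by positivity : (0:ℝ) < 3 * ℓ₀)).mp hα
    nlinarith
  have ht3 : α * ℓ₀ < 1 / 3 := by nlinarith
  have haℓ : α * ℓ ≤ α * ℓ₀ := by nlinarith
  have haμ : α * μ ≤ α * ℓ := by nlinarith
  set u : ℝ := 1 / (N:ℝ) with hu
  have hu0 : 0 < u := by positivity
  have hu2 : u ≤ 1 / 2 := by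
    rw [hu, div_le_div_iff₀ hn0 (by norm_num)]; linarith
  set a : ℝ := 1 - 2 * α * μ / N + α ^ 2 * ℓ₀ ^ 2 / N with hadef
  set b : ℝ := ((α * (ℓ + ℓ₀) + α ^ 2 * ℓ₀ * ℓ) / Real.sqrt N) * σ with hbdef
  set d : ℝ := (1 + 2 * α * ℓ + α ^ 2 * ℓ ^ 2) * σ ^ 2 with hddef
  have ha' : a = 1 - 2 * (α * μ) * u + (α * ℓ₀) ^ 2 * u := by
    rw [hadef, hu]; ring
  have ha : 0 < a := by rw [ha']; nlinarith [sq_nonneg (α * ℓ₀)]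
  have hb2 : b ^ 2 = (α * (ℓ + ℓ₀) + α ^ 2 * ℓ₀ * ℓ) ^ 2 * σ ^ 2 * u := by
    rw [hbdef, hu]
    field_simp
    rw [hs]
  have hD1 : (1:ℝ) ≤ 1 + 2 * α * ℓ + α ^ 2 * ℓ ^ 2 := by nlinarith
  have hσ2 : (0:ℝ) < σ ^ 2 := by positivity
  have hd : 0 < d := by
    rw [hddef]
    have : (0:ℝ) < 1 + 2 * α * ℓ + α ^ 2 * ℓ ^ 2 := by linarith
    positivity
  have hdet : 0 < a * d - b ^ 2 := by
    have htt : (α * ℓ₀) * (α * ℓ₀) < (α * ℓ₀) * (1/3) :=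
      mul_lt_mul_of_pos_left ht3 (mul_pos hα0 hℓ₀0)
    have e0 : α * (ℓ + ℓ₀) + α ^ 2 * ℓ₀ * ℓ = α * ℓ + α * ℓ₀ + (α * ℓ₀) * (α * ℓ) := by ring
    have e1 : (α * ℓ₀) * (α * ℓ) ≤ (α * ℓ₀) * (α * ℓ₀) :=
      mul_le_mul_of_nonneg_left haℓ (mul_pos hα0 hℓ₀0).le
    have h1 : (α * (ℓ + ℓ₀) + α ^ 2 * ℓ₀ * ℓ) ≤ 7 / 3 * (α * ℓ₀) := by linarith
    have h2 : 0 ≤ α * (ℓ + ℓ₀) + α ^ 2 * ℓ₀ * ℓ := by positivity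
    have h3 : (α * (ℓ + ℓ₀) + α ^ 2 * ℓ₀ * ℓ) ^ 2 ≤ (7 / 3 * (α * ℓ₀)) ^ 2 := by
      nlinarith
    have key : (α * (ℓ + ℓ₀) + α ^ 2 * ℓ₀ * ℓ) ^ 2 * u ≤ 49 / 18 * (α * ℓ₀) ^ 2 := by
      calc (α * (ℓ + ℓ₀) + α ^ 2 * ℓ₀ * ℓ) ^ 2 * u ≤ (7 / 3 * (α * ℓ₀)) ^ 2 * (1/2) :=
            mul_le_mul h3 hu2 hu0.le (by positivity)
        _ = 49 / 18 * (α * ℓ₀) ^ 2 := by ring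
    have hage : 1 - (α * ℓ₀) ≤ a := by
      rw [ha']; nlinarith [sq_nonneg (α * ℓ₀)]
    have hfin : 0 < 1 - (α * ℓ₀) - 49 / 18 * (α * ℓ₀) ^ 2 := by nlinarith
    have hAD : 1 - (α * ℓ₀) ≤ a * (1 + 2 * α * ℓ + α ^ 2 * ℓ ^ 2) := by
      calc 1 - (α * ℓ₀) ≤ a := hage
        _ = a * 1 := (mul_one a).symm
        _ ≤ a * (1 + 2 * α * ℓ + α ^ 2 * ℓ ^ 2) := mul_le_mul_of_nonneg_left hD1 ha.le
    have hmain : 0 < a * (1 + 2 * α * ℓ + α ^ 2 * ℓ ^ 2)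
        - (α * (ℓ + ℓ₀) + α ^ 2 * ℓ₀ * ℓ) ^ 2 * u := by
      nlinarith [sq_nonneg (α * ℓ₀)]
    have h := mul_pos hmain hσ2
    have heq : a * d - b ^ 2 = (a * (1 + 2 * α * ℓ + α ^ 2 * ℓ ^ 2)
        - (α * (ℓ + ℓ₀) + α ^ 2 * ℓ₀ * ℓ) ^ 2 * u) * σ ^ 2 := by
      rw [hddef, hb2]; ring
    linarith [heq ▸ h]
  rw [Matrix.posDef_iff_dotProduct_mulVec]
  constructor
  · rw [Matrix.IsHermitian]
    ext i j
    fin_cases i <;> fin_cases j <;> simp [Malpha]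
  · intro x hx
    have hMeq : Malpha μ ℓ ℓ₀ σ N α = !![a, b; b, d] := by
      rw [hadef, hbdef, hddef]; rfl
    have hq : dotProduct (star x) ((Malpha μ ℓ ℓ₀ σ N α).mulVec x)
        = a * x 0 ^ 2 + 2 * b * (x 0 * x 1) + d * x 1 ^ 2 := by
      rw [hMeq]
      simp [dotProduct, Matrix.mulVec, Fin.sum_univ_two, Matrix.vecHead, Matrix.vecTail]
      ring
    rw [hq]
    have hcases : ¬(x 0 = 0 ∧ x 1 = 0) := by
      intro ⟨h0, h1⟩
      apply hx
      funext i; fin_cases i <;> assumption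
    exact quad_form_pos a b d (x 0) (x 1) ha hdet hcases
end

section
/- Let σ̄ ∈ (0,1), μ, ℓ, ℓ₀ > 0 with μ ≤ ℓ ≤ ℓ₀, and N ≥ 2. There exists ᾱ > 0, independent of N, such that for every α ∈ (0, ᾱ) the matrix M_α (defined entrywise with the factors 1/N and 1/√N as in Theorem 1) satisfies λ_max(M_α) < 1; i.e., the step-size bound guaranteeing contraction does not vanish as N → ∞. -/
lemma posdef_two (a b c : ℝ) (ha : 0 < a) (hd : 0 < a * c - b ^ 2) :
    (!![a, b; b, c] : Matrix (Fin 2) (Fin 2) ℝ).PosDef := by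
  refine Matrix.PosDef.of_dotProduct_mulVec_pos ?_ ?_
  · unfold Matrix.IsHermitian
    ext i j
    fin_cases i <;> fin_cases j <;> simp
  · intro x hx
    have hQ : dotProduct (star x) (Matrix.mulVec (!![a, b; b, c] : Matrix (Fin 2) (Fin 2) ℝ) x)
        = a * x 0 ^ 2 + 2 * b * x 0 * x 1 + c * x 1 ^ 2 := by
      simp [dotProduct, Matrix.mulVec, Fin.sum_univ_two]
      ring
    rw [hQ]
    have h01 : x 0 ≠ 0 ∨ x 1 ≠ 0 := by
      by_contra h
      push_neg at h
      apply hx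
      ext i
      fin_cases i <;> simp [h.1, h.2]
    rcases eq_or_ne (x 1) 0 with h1 | h1
    · have h0 : x 0 ≠ 0 := by tauto
      have hx0 : 0 < x 0 ^ 2 := by positivity
      rw [h1]
      nlinarith
    · have hx1 : 0 < x 1 ^ 2 := by positivity
      nlinarith [sq_nonneg (a * x 0 + b * x 1), mul_pos hd hx1]

set_option maxHeartbeats 1000000 in
theorem stepsize_bound_independent_of_N (μ ℓ ℓ₀ σ : ℝ)
    (hμ : 0 < μ) (hℓ : 0 < ℓ) (hℓ₀ : 0 < ℓ₀)
    (hμℓ : μ ≤ ℓ) (hℓℓ₀ : ℓ ≤ ℓ₀) (hσ0 : 0 < σ) (hσ1 : σ < 1) :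
    ∃ αbar : ℝ, 0 < αbar ∧ ∀ N : ℕ, 2 ≤ N → ∀ α : ℝ, 0 < α → α < αbar →
      ((1 : Matrix (Fin 2) (Fin 2) ℝ) - Malpha μ ℓ ℓ₀ σ N α).PosDef := by
  have hσsq : σ ^ 2 < 1 := by nlinarith
  have hσnn : 0 ≤ σ ^ 2 := sq_nonneg σ
  refine ⟨min (min (μ / ℓ₀ ^ 2) (1 / ℓ))
      (min ((1 - σ ^ 2) / (6 * ℓ)) (μ * (1 - σ ^ 2) / (18 * ℓ₀ ^ 2))), ?_, ?_⟩
  · have h3 : 0 < (1 - σ ^ 2) / (6 * ℓ) := div_pos (by linarith) (by positivity)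
    have h4 : 0 < μ * (1 - σ ^ 2) / (18 * ℓ₀ ^ 2) :=
      div_pos (mul_pos hμ (by linarith)) (by positivity)
    have h1 : 0 < μ / ℓ₀ ^ 2 := div_pos hμ (by positivity)
    have h2 : 0 < 1 / ℓ := by positivity
    exact lt_min (lt_min h1 h2) (lt_min h3 h4)
  intro N hN α hα hαbar
  have hb1 : α < μ / ℓ₀ ^ 2 := lt_of_lt_of_le hαbar ((min_le_left _ _).trans (min_le_left _ _))
  have hb2 : α < 1 / ℓ := lt_of_lt_of_le hαbar ((min_le_left _ _).trans (min_le_right _ _))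
  have hb3 : α < (1 - σ ^ 2) / (6 * ℓ) :=
    lt_of_lt_of_le hαbar ((min_le_right _ _).trans (min_le_left _ _))
  have hb4 : α < μ * (1 - σ ^ 2) / (18 * ℓ₀ ^ 2) :=
    lt_of_lt_of_le hαbar ((min_le_right _ _).trans (min_le_right _ _))
  have h1 : α * ℓ₀ ^ 2 < μ := by
    rw [lt_div_iff₀ (by positivity)] at hb1; linarith
  have h2 : α * ℓ < 1 := by rw [lt_div_iff₀ hℓ] at hb2; linarith
  have h3 : 6 * (α * ℓ) * σ ^ 2 < 1 - σ ^ 2 := by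
    rw [lt_div_iff₀ (by positivity)] at hb3
    calc 6 * (α * ℓ) * σ ^ 2 ≤ 6 * (α * ℓ) * 1 := by
          apply mul_le_mul_of_nonneg_left (by linarith) (by positivity)
      _ < 1 - σ ^ 2 := by linarith
  have h4 : 18 * α * ℓ₀ ^ 2 < μ * (1 - σ ^ 2) := by
    rw [lt_div_iff₀ (by positivity)] at hb4; linarith
  have hNr : (2 : ℝ) ≤ (N : ℝ) := by exact_mod_cast hN
  have hNpos : (0 : ℝ) < (N : ℝ) := by linarith
  have hs : Real.sqrt (N : ℝ) ^ 2 = (N : ℝ) := Real.sq_sqrt hNpos.le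
  have hspos : 0 < Real.sqrt (N : ℝ) := Real.sqrt_pos.mpr hNpos
  set P : ℝ := α * (ℓ + ℓ₀) + α ^ 2 * ℓ₀ * ℓ with hP
  set a : ℝ := 2 * α * μ / N - α ^ 2 * ℓ₀ ^ 2 / N with hadef
  set b : ℝ := -((P / Real.sqrt N) * σ) with hbdef
  set c : ℝ := 1 - (1 + 2 * α * ℓ + α ^ 2 * ℓ ^ 2) * σ ^ 2 with hcdef
  have hM : (1 : Matrix (Fin 2) (Fin 2) ℝ) - Malpha μ ℓ ℓ₀ σ N α = !![a, b; b, c] := by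
    ext i j
    fin_cases i <;> fin_cases j <;>
      simp [Malpha, Matrix.one_apply, hadef, hbdef, hcdef, hP] <;> ring
  rw [hM]
  -- bounds
  have hαℓ : 0 ≤ α * ℓ := by positivity
  have hsq : α ^ 2 * ℓ ^ 2 ≤ α * ℓ := by
    have := mul_le_mul_of_nonneg_left h2.le hαℓ
    nlinarith
  have hc : (1 - σ ^ 2) / 2 ≤ c := by
    have h' : (2 * α * ℓ + α ^ 2 * ℓ ^ 2) * σ ^ 2 ≤ 3 * (α * ℓ) * σ ^ 2 := by
      apply mul_le_mul_of_nonneg_right _ hσnn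
      linarith
    rw [hcdef]; nlinarith
  have hcpos : 0 < c := lt_of_lt_of_le (by linarith) hc
  have hamin : μ ≤ 2 * μ - α * ℓ₀ ^ 2 := by linarith
  have hPle : P ≤ 3 * α * ℓ₀ := by
    have ht : α ^ 2 * ℓ₀ * ℓ ≤ α * ℓ₀ := by
      have := mul_le_mul_of_nonneg_left h2.le (by positivity : 0 ≤ α * ℓ₀)
      nlinarith
    have ht2 : α * (ℓ + ℓ₀) ≤ 2 * α * ℓ₀ := by nlinarith
    rw [hP]; linarith
  have hPpos : 0 < P := by rw [hP]; positivity
  have hkey : 0 < α * (2 * μ - α * ℓ₀ ^ 2) * c - P ^ 2 * σ ^ 2 := by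
    have e1 : α * (μ * ((1 - σ ^ 2) / 2)) ≤ α * ((2 * μ - α * ℓ₀ ^ 2) * c) :=
      mul_le_mul_of_nonneg_left
        (mul_le_mul hamin hc (by linarith) (by linarith)) hα.le
    have eP : P ^ 2 ≤ (3 * α * ℓ₀) ^ 2 := by nlinarith
    have e2 : P ^ 2 * σ ^ 2 ≤ 9 * α ^ 2 * ℓ₀ ^ 2 := by
      calc P ^ 2 * σ ^ 2 ≤ (3 * α * ℓ₀) ^ 2 * σ ^ 2 := mul_le_mul_of_nonneg_right eP hσnn
        _ ≤ (3 * α * ℓ₀) ^ 2 * 1 := mul_le_mul_of_nonneg_left (by linarith) (by positivity)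
        _ = 9 * α ^ 2 * ℓ₀ ^ 2 := by ring
    have e3 : 9 * α ^ 2 * ℓ₀ ^ 2 < α * (μ * ((1 - σ ^ 2) / 2)) := by
      have := mul_lt_mul_of_pos_left h4 (show 0 < α / 2 by positivity)
      nlinarith
    nlinarith
  have ha' : a = α * (2 * μ - α * ℓ₀ ^ 2) / N := by rw [hadef]; ring
  have ha : 0 < a := by
    rw [ha']; exact div_pos (mul_pos hα (by linarith)) hNpos
  apply posdef_two _ _ _ ha
  have hb2' : b ^ 2 = P ^ 2 * σ ^ 2 / N := by
    rw [hbdef]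
    rw [neg_pow, mul_pow, div_pow, hs]
    ring
  rw [hb2', ha', div_mul_eq_mul_div, div_sub_div_same]
  exact div_pos (by linarith) hNpos
end
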